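/- (Log-moment of the chi-squared distribution.) Let ν > 0 be a real number. Then ∫₀^∞ (log t) · t^{ν/2 − 1} e^{−t/2} / (2^{ν/2} Γ(ν/2)) dt = ψ(ν/2) + log 2, where Γ is the real Gamma function and ψ(s) denotes the digamma function, i.e. the derivative of s ↦ log Γ(s). Consequently, if ‖v‖ = σ√T with T chi-squared distributed with ν degrees of freedom, then E[log ‖v‖] = log σ + (1/2)(ψ(ν/2) + log 2). -/

import Mathlib

/-- The digamma function: the derivative of `log ∘ Γ` on the reals. -/
noncomputable def digamma (s : ℝ) : ℝ := deriv (fun x : ℝ => Real.log (Real.Gamma x)) s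

open MeasureTheory Set Filter Topology

lemma gammaAux {s : ℝ} (hs : 0 < s) :
    IntegrableOn (fun t : ℝ => Real.log t * (t ^ (s - 1) * Real.exp (-t))) (Set.Ioi 0) ∧
    HasDerivAt Real.Gamma (∫ t in Set.Ioi 0, Real.log t * (t ^ (s - 1) * Real.exp (-t))) s := by
  have hs' : 0 < (s : ℂ).re := by simpa using hs
  have key := mellin_hasDerivAt_of_isBigO_rpow (E := ℂ)
      (f := fun x : ℝ => (Real.exp (-x) : ℂ)) (s := (s : ℂ)) ?_ ?_ (lt_add_one _) ?_ hs'
  rotate_left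
  · refine (Continuous.continuousOn ?_).locallyIntegrableOn measurableSet_Ioi
    exact Complex.continuous_ofReal.comp (Real.continuous_exp.comp continuous_neg)
  · rw [← Asymptotics.isBigO_norm_left]
    simp_rw [Complex.norm_real,
      Asymptotics.isBigO_norm_left]
    simpa only [neg_one_mul] using
      (isLittleO_exp_neg_mul_rpow_atTop zero_lt_one _).isBigO
  · simp_rw [neg_zero, Real.rpow_zero]
    refine Asymptotics.isBigO_const_of_tendsto (?_ : Tendsto _ _ (𝓝 (1 : ℂ))) one_ne_zero
    rw [(by simp : (1 : ℂ) = Real.exp (-0))]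
    exact (Complex.continuous_ofReal.comp
      (Real.continuous_exp.comp continuous_neg)).continuousWithinAt
  have heq : EqOn (fun t : ℝ => (t : ℂ) ^ ((s : ℂ) - 1) • (Real.log t • (Real.exp (-t) : ℂ)))
      (fun t : ℝ => ((Real.log t * (t ^ (s - 1) * Real.exp (-t)) : ℝ) : ℂ)) (Set.Ioi 0) := by
    intro t ht
    have ht' : (0 : ℝ) ≤ t := le_of_lt ht
    simp only [smul_eq_mul, Complex.real_smul]
    rw [show ((s : ℂ) - 1) = ((s - 1 : ℝ) : ℂ) by push_cast; ring,
      ← Complex.ofReal_cpow ht']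
    push_cast
    ring
  have hintC : IntegrableOn
      (fun t : ℝ => ((Real.log t * (t ^ (s - 1) * Real.exp (-t)) : ℝ) : ℂ)) (Set.Ioi 0) := by
    have h1 : IntegrableOn
        (fun t : ℝ => (t : ℂ) ^ ((s : ℂ) - 1) • (Real.log t • (Real.exp (-t) : ℂ)))
        (Set.Ioi 0) := key.1
    exact h1.congr_fun heq measurableSet_Ioi
  have hintR : IntegrableOn (fun t : ℝ => Real.log t * (t ^ (s - 1) * Real.exp (-t)))
      (Set.Ioi 0) := by
    simpa only [IntegrableOn, RCLike.re_to_complex, Complex.ofReal_re, RCLike.ofReal_re] using hintC.re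
  refine ⟨hintR, ?_⟩
  have hmval : mellin (fun t : ℝ => Real.log t • (Real.exp (-t) : ℂ)) (s : ℂ)
      = ((∫ t in Set.Ioi 0, Real.log t * (t ^ (s - 1) * Real.exp (-t)) : ℝ) : ℂ) := by
    rw [mellin, setIntegral_congr_fun measurableSet_Ioi heq]
    exact integral_ofReal
  have hG : HasDerivAt Complex.GammaIntegral
      (((∫ t in Set.Ioi 0, Real.log t * (t ^ (s - 1) * Real.exp (-t)) : ℝ) : ℂ)) (s : ℂ) := by
    have h2 := key.2
    rwa [← Complex.GammaIntegral_eq_mellin, hmval] at h2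
  have hre := hG.real_of_complex
  simp only [Complex.ofReal_re] at hre
  refine hre.congr_of_eventuallyEq ?_
  filter_upwards [eventually_gt_nhds hs] with x hx
  rw [← Complex.Gamma_eq_integral (by simpa using hx), Complex.Gamma_ofReal, Complex.ofReal_re]


/-- **Log-moment of the chi-squared distribution.**
For `ν > 0`, `∫₀^∞ (log t)·t^{ν/2-1}e^{-t/2}/(2^{ν/2}Γ(ν/2)) dt = ψ(ν/2) + log 2`,
and consequently for `σ > 0`, the expectation of `log(σ·√T)` with `T ~ χ²_ν` is
`log σ + (1/2)(ψ(ν/2) + log 2)`. -/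
theorem chi_squared_log_moment (ν : ℝ) (hν : 0 < ν) :
    (∫ t in Set.Ioi (0 : ℝ),
        Real.log t * (t ^ (ν / 2 - 1) * Real.exp (-t / 2) /
          (2 ^ (ν / 2) * Real.Gamma (ν / 2))))
      = digamma (ν / 2) + Real.log 2 ∧
    ∀ σ : ℝ, 0 < σ →
      (∫ t in Set.Ioi (0 : ℝ),
          Real.log (σ * Real.sqrt t) * (t ^ (ν / 2 - 1) * Real.exp (-t / 2) /
            (2 ^ (ν / 2) * Real.Gamma (ν / 2))))
        = Real.log σ + (1 / 2) * (digamma (ν / 2) + Real.log 2) := by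
  set s : ℝ := ν / 2 with hsdef
  have hs : 0 < s := by positivity
  have hΓ : 0 < Real.Gamma s := Real.Gamma_pos_of_pos hs
  have h2s : (0 : ℝ) < 2 ^ s := Real.rpow_pos_of_pos two_pos s
  set G : ℝ := ∫ t in Set.Ioi 0, Real.log t * (t ^ (s - 1) * Real.exp (-t)) with hGdef
  have hintG : IntegrableOn (fun t : ℝ => Real.log t * (t ^ (s - 1) * Real.exp (-t)))
      (Set.Ioi 0) := (gammaAux hs).1
  -- digamma value
  have hdig : digamma s = G / Real.Gamma s := ((gammaAux hs).2.log hΓ.ne').deriv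
  -- Gamma integral
  have hΓint : ∫ x in Set.Ioi (0:ℝ), x ^ (s - 1) * Real.exp (-x) = Real.Gamma s := by
    rw [Real.Gamma_eq_integral hs]
    exact setIntegral_congr_fun measurableSet_Ioi fun x _ => mul_comm _ _
  have hint1 : IntegrableOn (fun x : ℝ => x ^ (s - 1) * Real.exp (-x)) (Set.Ioi 0) :=
    (Real.GammaIntegral_convergent hs).congr_fun (fun x _ => mul_comm _ _) measurableSet_Ioi
  -- the function under study
  set h : ℝ → ℝ := fun t => Real.log t * (t ^ (s - 1) * Real.exp (-t / 2)) with hhdef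
  have h2x : EqOn (fun x : ℝ => h (2 * x))
      (fun x : ℝ => 2 ^ (s - 1) * (Real.log 2 * (x ^ (s - 1) * Real.exp (-x))
        + Real.log x * (x ^ (s - 1) * Real.exp (-x)))) (Set.Ioi 0) := by
    intro x hx
    have hx' : (0 : ℝ) < x := hx
    simp only [hhdef]
    rw [show -(2 * x) / 2 = -x by ring, Real.log_mul two_ne_zero hx'.ne',
      Real.mul_rpow (by norm_num) hx'.le]
    ring
  have hI2 : ∫ x in Set.Ioi (0:ℝ), h (2 * x)
      = 2 ^ (s - 1) * (Real.log 2 * Real.Gamma s + G) := by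
    rw [setIntegral_congr_fun measurableSet_Ioi h2x, integral_const_mul,
      integral_add (hint1.const_mul _) hintG, integral_const_mul, hΓint]
  have hinth : IntegrableOn h (Set.Ioi 0) := by
    have hrhs : IntegrableOn (fun x : ℝ => 2 ^ (s - 1) * (Real.log 2 * (x ^ (s - 1) * Real.exp (-x))
        + Real.log x * (x ^ (s - 1) * Real.exp (-x)))) (Set.Ioi 0) := by
      exact ((hint1.const_mul (Real.log 2)).add hintG).const_mul ((2:ℝ) ^ (s - 1))
    have hcomp : IntegrableOn (fun x : ℝ => h (2 * x)) (Set.Ioi 0) :=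
      hrhs.congr_fun (fun x hx => (h2x hx).symm) measurableSet_Ioi
    have := (integrableOn_Ioi_comp_mul_left_iff h 0 two_pos).mp hcomp
    simpa using this
  have hsub := integral_comp_mul_left_Ioi h 0 two_pos
  rw [mul_zero, smul_eq_mul] at hsub
  have hIh : ∫ t in Set.Ioi (0:ℝ), h t = 2 ^ s * (Real.log 2 * Real.Gamma s + G) := by
    have e1 : ∫ t in Set.Ioi (0:ℝ), h t = 2 * ∫ x in Set.Ioi (0:ℝ), h (2 * x) := by
      rw [hsub]; ring
    have e2 : (2:ℝ) ^ s = 2 * 2 ^ (s - 1) := by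
      have h' := Real.rpow_add two_pos 1 (s - 1)
      rw [show (1:ℝ) + (s - 1) = s by ring, Real.rpow_one] at h'
      exact h'
    rw [e1, hI2, e2]; ring
  -- part 1
  have hpart1 : (∫ t in Set.Ioi (0:ℝ),
      Real.log t * (t ^ (s - 1) * Real.exp (-t / 2) / (2 ^ s * Real.Gamma s)))
      = digamma s + Real.log 2 := by
    have e : ∀ t : ℝ, Real.log t * (t ^ (s - 1) * Real.exp (-t / 2) / (2 ^ s * Real.Gamma s))
        = h t * (2 ^ s * Real.Gamma s)⁻¹ := by
      intro t; simp only [hhdef]; rw [div_eq_mul_inv]; ring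
    simp_rw [e]
    rw [integral_mul_const, hIh, hdig]
    field_simp
    ring
  -- density integrates to 1
  have hdens_int : IntegrableOn (fun t : ℝ => t ^ (s - 1) * Real.exp (-t / 2)) (Set.Ioi 0) := by
    have := integrableOn_rpow_mul_exp_neg_mul_rpow (show (-1:ℝ) < s - 1 by linarith)
      (show (0:ℝ) < 1 from one_pos) one_half_pos
    refine this.congr_fun (fun x hx => ?_) measurableSet_Ioi
    dsimp only
    rw [Real.rpow_one]
    congr 1
    ring
  have hdens : ∫ t in Set.Ioi (0:ℝ), t ^ (s - 1) * Real.exp (-t / 2) / (2 ^ s * Real.Gamma s)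
      = 1 := by
    have hval := Real.integral_rpow_mul_exp_neg_mul_Ioi hs one_half_pos
    rw [show (1:ℝ) / (1/2) = 2 by norm_num] at hval
    have e : ∀ t : ℝ, t ^ (s - 1) * Real.exp (-t / 2) / (2 ^ s * Real.Gamma s)
        = t ^ (s - 1) * Real.exp (-(1/2 * t)) * (2 ^ s * Real.Gamma s)⁻¹ := by
      intro t
      rw [show -(1/2 * t) = -t / 2 by ring, div_eq_mul_inv]
    simp_rw [e]
    rw [integral_mul_const, hval, mul_inv_cancel₀ (by positivity)]
  refine ⟨hpart1, fun σ hσ => ?_⟩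
  -- part 2
  have split : EqOn (fun t : ℝ => Real.log (σ * Real.sqrt t)
      * (t ^ (s - 1) * Real.exp (-t / 2) / (2 ^ s * Real.Gamma s)))
      (fun t : ℝ => Real.log σ * (t ^ (s - 1) * Real.exp (-t / 2) / (2 ^ s * Real.Gamma s))
        + (1/2) * (Real.log t * (t ^ (s - 1) * Real.exp (-t / 2) / (2 ^ s * Real.Gamma s))))
      (Set.Ioi 0) := by
    intro t ht
    have ht' : (0 : ℝ) < t := ht
    dsimp only
    rw [Real.log_mul hσ.ne' (Real.sqrt_pos.mpr ht').ne', Real.log_sqrt ht'.le]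
    ring
  have hint_a : IntegrableOn (fun t : ℝ => Real.log σ
      * (t ^ (s - 1) * Real.exp (-t / 2) / (2 ^ s * Real.Gamma s))) (Set.Ioi 0) :=
    (hdens_int.div_const _).const_mul _
  have hint_b0 : IntegrableOn (fun t : ℝ => Real.log t
      * (t ^ (s - 1) * Real.exp (-t / 2) / (2 ^ s * Real.Gamma s))) (Set.Ioi 0) := by
    have e : (fun t : ℝ => Real.log t
        * (t ^ (s - 1) * Real.exp (-t / 2) / (2 ^ s * Real.Gamma s)))
        = fun t => h t * (2 ^ s * Real.Gamma s)⁻¹ := by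
      funext t; simp only [hhdef]; rw [div_eq_mul_inv]; ring
    rw [e]
    exact hinth.mul_const _
  rw [setIntegral_congr_fun measurableSet_Ioi split,
    integral_add hint_a (hint_b0.const_mul _), integral_const_mul, integral_const_mul,
    hdens, hpart1, mul_one]
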